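/- Let A ∈ ℂ^{m×n}, let S ∈ ℂ^{m×m} and T ∈ ℂ^{n×n} be Hermitian positive definite. Let Q₁ ∈ ℂ^{m×r} satisfy Q₁*SQ₁ = I_r and Q₂ ∈ ℂ^{n×s} satisfy Q₂*TQ₂ = I_s. If ‖(I − Q₁Q₁*S)A‖₂ ≤ ε_S and ‖(I − Q₂Q₂*T)A*‖₂ ≤ ε_T for some ε_S, ε_T ≥ 0, then ‖A − Q₁Q₁*S·A·T Q₂Q₂*‖₂ ≤ ε_S + ε_T·‖Q₁Q₁*S‖₂. -/

import Mathlib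

open Matrix ComplexOrder

noncomputable section

/-- Euclidean (ℓ²) norm of a complex vector. -/
def vecNorm2 {m : Type*} [Fintype m] (x : m → ℂ) : ℝ :=
  Real.sqrt (∑ i, ‖x i‖ ^ 2)

/-- Spectral (ℓ²-operator) norm of a complex matrix. -/
def specNorm {m p : Type*} [Fintype m] [Fintype p] (M : Matrix m p ℂ) : ℝ :=
  sSup {t : ℝ | ∃ x : p → ℂ, x ≠ 0 ∧ t = vecNorm2 (M *ᵥ x) / vecNorm2 x}

/-- The B-inner product ⟨x,y⟩_B = y*Bx. -/
def Binner {m : Type*} [Fintype m] (B : Matrix m m ℂ) (x y : m → ℂ) : ℂ :=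
  star y ⬝ᵥ B *ᵥ x

/-- The B-norm of a vector, ‖x‖_B = √(x*Bx). -/
def vecBnorm {m : Type*} [Fintype m] (B : Matrix m m ℂ) (x : m → ℂ) : ℝ :=
  Real.sqrt (star x ⬝ᵥ B *ᵥ x).re

/-- The induced B-norm of a matrix, ‖M‖_B = sup_{x ≠ 0} ‖Mx‖_B / ‖x‖_B. -/
def matBnorm {m : Type*} [Fintype m] (B M : Matrix m m ℂ) : ℝ :=
  sSup {t : ℝ | ∃ x : m → ℂ, x ≠ 0 ∧ t = vecBnorm B (M *ᵥ x) / vecBnorm B x}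

open scoped Matrix.Norms.L2Operator

lemma vecNorm2_eq {p : Type*} [Fintype p] (x : p → ℂ) :
    vecNorm2 x = ‖(EuclideanSpace.equiv p ℂ).symm x‖ := by
  rw [EuclideanSpace.norm_eq]
  rfl

lemma vecNorm2_pos {p : Type*} [Fintype p] {x : p → ℂ} (hx : x ≠ 0) :
    0 < vecNorm2 x := by
  rw [vecNorm2_eq]
  rw [norm_pos_iff]
  intro h
  apply hx
  have := congrArg (EuclideanSpace.equiv p ℂ) h
  simpa using this

lemma specNorm_eq_norm {m p : Type*} [Fintype m] [Fintype p] [DecidableEq p]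
    (M : Matrix m p ℂ) : specNorm M = ‖M‖ := by
  rw [Matrix.l2_opNorm_def]
  set f := (Matrix.toEuclideanLin (𝕜 := ℂ) (m := m) (n := p)).trans
    LinearMap.toContinuousLinearMap M with hf
  have hfx : ∀ x : p → ℂ, f ((EuclideanSpace.equiv p ℂ).symm x)
      = (EuclideanSpace.equiv m ℂ).symm (M *ᵥ x) := fun x =>
    Matrix.toEuclideanLin_toLp M x
  set s : Set ℝ := {t : ℝ | ∃ x : p → ℂ, x ≠ 0 ∧ t = vecNorm2 (M *ᵥ x) / vecNorm2 x}
    with hs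
  have hmem : ∀ t ∈ s, t ≤ ‖f‖ := by
    rintro t ⟨x, hx, rfl⟩
    rw [div_le_iff₀ (vecNorm2_pos hx)]
    rw [vecNorm2_eq, vecNorm2_eq]
    calc ‖(EuclideanSpace.equiv m ℂ).symm (M *ᵥ x)‖
        = ‖f ((EuclideanSpace.equiv p ℂ).symm x)‖ := by rw [hfx]
      _ ≤ ‖f‖ * ‖(EuclideanSpace.equiv p ℂ).symm x‖ := f.le_opNorm _
  have hle : sSup s ≤ ‖f‖ := Real.sSup_le hmem (norm_nonneg f)
  refine le_antisymm hle ?_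
  by_cases hp : ∃ x : p → ℂ, x ≠ 0
  · obtain ⟨x₀, hx₀⟩ := hp
    have hbdd : BddAbove s := ⟨‖f‖, hmem⟩
    have h0 : (0:ℝ) ≤ sSup s := by
      refine le_trans ?_ (le_csSup hbdd ⟨x₀, hx₀, rfl⟩)
      exact div_nonneg (Real.sqrt_nonneg _) (Real.sqrt_nonneg _)
    refine f.opNorm_le_bound h0 ?_
    intro v
    by_cases hv : v = 0
    · simp [hv]
    · set x : p → ℂ := (EuclideanSpace.equiv p ℂ) v with hxv
      have hx : x ≠ 0 := by
        intro h
        apply hv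
        have := congrArg (EuclideanSpace.equiv p ℂ).symm h
        simpa [hxv] using this
      have hvx : (EuclideanSpace.equiv p ℂ).symm x = v := by simp [hxv]
      have hel : vecNorm2 (M *ᵥ x) / vecNorm2 x ≤ sSup s :=
        le_csSup hbdd ⟨x, hx, rfl⟩
      have := (div_le_iff₀ (vecNorm2_pos hx)).mp hel
      calc ‖f v‖ = vecNorm2 (M *ᵥ x) := by
            rw [vecNorm2_eq, ← hfx, hvx]
        _ ≤ sSup s * vecNorm2 x := this
        _ = sSup s * ‖v‖ := by rw [vecNorm2_eq, hvx]
  · push_neg at hp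
    have : ∀ v : EuclideanSpace ℂ p, v = 0 := by
      intro v
      have := hp ((EuclideanSpace.equiv p ℂ) v)
      have h2 := congrArg (EuclideanSpace.equiv p ℂ).symm this
      simpa using h2
    have hf0 : f = 0 := by
      ext v
      rw [this v]
      simp
    rw [hf0]
    have hse : s = ∅ := by
      ext t
      simp only [hs, Set.mem_setOf_eq, Set.mem_empty_iff_false, iff_false, not_exists]
      intro x hx
      exact hx.1 (hp x)
    simp only [norm_zero]
    rw [show specNorm M = sSup s from rfl, hse, Real.sSup_empty]
/-- randomized GSVD low-rank error bound:
    ‖A − Q₁Q₁*S·A·T·Q₂Q₂*‖₂ ≤ ε_S + ε_T·‖Q₁Q₁*S‖₂. -/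
theorem statement17 {m n r s : ℕ} (A : Matrix (Fin m) (Fin n) ℂ)
    (S : Matrix (Fin m) (Fin m) ℂ) (T : Matrix (Fin n) (Fin n) ℂ)
    (hS : S.PosDef) (hT : T.PosDef)
    (Q₁ : Matrix (Fin m) (Fin r) ℂ) (hQ₁ : Q₁ᴴ * S * Q₁ = 1)
    (Q₂ : Matrix (Fin n) (Fin s) ℂ) (hQ₂ : Q₂ᴴ * T * Q₂ = 1)
    (εS εT : ℝ) (hεS : 0 ≤ εS) (hεT : 0 ≤ εT)
    (h₁ : specNorm ((1 - Q₁ * Q₁ᴴ * S) * A) ≤ εS)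
    (h₂ : specNorm ((1 - Q₂ * Q₂ᴴ * T) * Aᴴ) ≤ εT) :
    specNorm (A - Q₁ * Q₁ᴴ * S * A * T * (Q₂ * Q₂ᴴ)) ≤
      εS + εT * specNorm (Q₁ * Q₁ᴴ * S) := by
  have hT' : Tᴴ = T := hT.1
  have hB : ((1 - Q₂ * Q₂ᴴ * T) * Aᴴ)ᴴ = A * (1 - T * (Q₂ * Q₂ᴴ)) := by
    simp only [conjTranspose_mul, conjTranspose_sub, conjTranspose_one,
      conjTranspose_conjTranspose, hT']
  have key : A - Q₁ * Q₁ᴴ * S * A * T * (Q₂ * Q₂ᴴ) =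
      (1 - Q₁ * Q₁ᴴ * S) * A + (Q₁ * Q₁ᴴ * S) * ((1 - Q₂ * Q₂ᴴ * T) * Aᴴ)ᴴ := by
    rw [hB, Matrix.sub_mul, Matrix.one_mul, Matrix.mul_sub, Matrix.mul_one, Matrix.mul_sub, sub_add_sub_cancel]
    simp only [Matrix.mul_assoc]
  simp only [specNorm_eq_norm] at h₁ h₂ ⊢
  calc ‖A - Q₁ * Q₁ᴴ * S * A * T * (Q₂ * Q₂ᴴ)‖
      = ‖(1 - Q₁ * Q₁ᴴ * S) * A + (Q₁ * Q₁ᴴ * S) * ((1 - Q₂ * Q₂ᴴ * T) * Aᴴ)ᴴ‖ := by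
        rw [key]
    _ ≤ ‖(1 - Q₁ * Q₁ᴴ * S) * A‖ + ‖(Q₁ * Q₁ᴴ * S) * ((1 - Q₂ * Q₂ᴴ * T) * Aᴴ)ᴴ‖ :=
        norm_add_le _ _
    _ ≤ εS + ‖Q₁ * Q₁ᴴ * S‖ * ‖((1 - Q₂ * Q₂ᴴ * T) * Aᴴ)ᴴ‖ :=
        add_le_add h₁ (Matrix.l2_opNorm_mul _ _)
    _ = εS + ‖Q₁ * Q₁ᴴ * S‖ * ‖(1 - Q₂ * Q₂ᴴ * T) * Aᴴ‖ := by
        rw [Matrix.l2_opNorm_conjTranspose]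
    _ ≤ εS + ‖Q₁ * Q₁ᴴ * S‖ * εT := by
        gcongr
    _ = εS + εT * ‖Q₁ * Q₁ᴴ * S‖ := by ring
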